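/- Let G be a group, e a central element of G, and τ : G → (k, +) an additive character. Then δ(g) := τ(g)·g·(e − 1) defines a k-linear derivation of the group algebra kG, and the Ore extension H = kG[z; δ] is a Hopf algebra with Δ(z) = z ⊗ 1 + e ⊗ z. -/

import Mathlib

open scoped TensorProduct
open MonoidAlgebra MulOpposite

universe u
namespace Stmt15Aux

variable {k : Type u} [Field k] {G : Type u} [Group G]

noncomputable def d (e : G) (τ : G → k) : MonoidAlgebra k G →ₗ[k] MonoidAlgebra k G :=
  (Finsupp.lsum k fun g => LinearMap.toSpanSingleton k _ (τ g • (of k G g * (of k G e - 1)))) ∘ₗ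
    (MonoidAlgebra.coeffLinearEquiv k : MonoidAlgebra k G ≃ₗ[k] G →₀ k).toLinearMap

lemma single_eq (g : G) (c : k) :
    (MonoidAlgebra.single g c : MonoidAlgebra k G) = c • of k G g := by
  simp [MonoidAlgebra.of_apply, MonoidAlgebra.smul_single']

lemma d_single (e : G) (τ : G → k) (g : G) (c : k) :
    d e τ (MonoidAlgebra.single g c : MonoidAlgebra k G)
      = c • τ g • (of k G g * (of k G e - 1)) := by
  exact Finsupp.lsum_single k _ g c

lemma comm_e (e : G) (he : ∀ g : G, e * g = g * e) (h : G) :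
    (of k G e - 1) * of k G h = of k G h * (of k G e - 1) := by
  have : (of k G e) * of k G h = of k G h * of k G e := by
    rw [← map_mul, ← map_mul, he]
  simp [sub_mul, mul_sub, this]
  rw [he]

lemma d_mul (e : G) (he : ∀ g : G, e * g = g * e) (τ : G → k)
    (hτ : ∀ g h : G, τ (g * h) = τ g + τ h) :
    ∀ a b : MonoidAlgebra k G, d e τ (a * b) = d e τ a * b + a * d e τ b := by
  intro a b
  induction a using MonoidAlgebra.induction_linear with
  | zero => simp
  | add p q hp hq =>
    simp only [add_mul, map_add, hp, hq]; abel
  | single g c =>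
    induction b using MonoidAlgebra.induction_linear with
    | zero => simp
    | add p q hp hq =>
      simp only [mul_add, map_add, hp, hq]; abel
    | single h cc =>
      rw [show (MonoidAlgebra.single g c : MonoidAlgebra k G) * MonoidAlgebra.single h cc
            = MonoidAlgebra.single (g * h) (c * cc) from MonoidAlgebra.single_mul_single ..,
        d_single, d_single, d_single, single_eq g c, single_eq h cc, hτ]
      rw [map_mul (of k G) g h]
      simp only [smul_mul_assoc, mul_smul_comm, add_smul, smul_smul]
      rw [mul_assoc (of k G g) (of k G e - 1) (of k G h), comm_e e he h,
        ← mul_assoc (of k G g) (of k G h) (of k G e - 1)]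
      module

section UP
variable {H : Type u} [Ring H] [Algebra k H]
variable (e : G) (τ : G → k)
variable (ι : MonoidAlgebra k G →ₐ[k] H) (z : H) (b : Module.Basis (G × ℕ) k H)
variable {A : Type u} [Ring A] [Algebra k A]

noncomputable def UL (f : MonoidAlgebra k G →ₐ[k] A) (w : A) : H →ₗ[k] A :=
  b.constr k fun p => f (of k G p.1) * w ^ p.2

lemma UL_basis (f : MonoidAlgebra k G →ₐ[k] A) (w : A) (g : G) (n : ℕ) :
    UL b f w (b (g, n)) = f (of k G g) * w ^ n :=
  b.constr_basis k _ _

lemma UL_apply (hb : ∀ g n, b (g, n) = ι (of k G g) * z ^ n)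
    (f : MonoidAlgebra k G →ₐ[k] A) (w : A) (x : MonoidAlgebra k G) (n : ℕ) :
    UL b f w (ι x * z ^ n) = f x * w ^ n := by
  induction x using MonoidAlgebra.induction_linear with
  | zero => simp
  | add p q hp hq => rw [map_add, add_mul, map_add, hp, hq, map_add, add_mul]
  | single g c =>
    rw [single_eq, map_smul, map_smul, smul_mul_assoc, smul_mul_assoc, map_smul,
      ← hb, UL_basis]

lemma step (f : MonoidAlgebra k G →ₐ[k] A) (w : A)
    (hw : ∀ x, w * f x = f x * w + f (d e τ x)) (y : MonoidAlgebra k G) (n : ℕ) :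
    w * (f y * w ^ n) = f y * w ^ (n + 1) + f (d e τ y) * w ^ n := by
  rw [← mul_assoc, hw, add_mul, pow_succ', ← mul_assoc]

lemma UL_mul_aux (hb : ∀ g n, b (g, n) = ι (of k G g) * z ^ n)
    (hz : ∀ x, z * ι x = ι x * z + ι (d e τ x))
    (f : MonoidAlgebra k G →ₐ[k] A) (w : A)
    (hw : ∀ x, w * f x = f x * w + f (d e τ x)) :
    ∀ (m : ℕ) (x y : MonoidAlgebra k G) (n : ℕ),
      UL b f w (ι x * z ^ m * (ι y * z ^ n)) = f x * w ^ m * (f y * w ^ n) := by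
  intro m
  induction m with
  | zero =>
    intro x y n
    rw [pow_zero, pow_zero, mul_one, mul_one, ← mul_assoc, ← map_mul,
      UL_apply ι z b hb, map_mul, mul_assoc]
  | succ m ih =>
    intro x y n
    have hzy : z * (ι y * z ^ n) = ι y * z ^ (n + 1) + ι (d e τ y) * z ^ n :=
      step e τ ι z hz y n
    have lhs : ι x * z ^ (m + 1) * (ι y * z ^ n)
        = ι x * z ^ m * (ι y * z ^ (n + 1)) + ι x * z ^ m * (ι (d e τ y) * z ^ n) := by
      rw [pow_succ, show ι x * (z ^ m * z) * (ι y * z ^ n)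
          = ι x * z ^ m * (z * (ι y * z ^ n)) from by noncomm_ring, hzy, mul_add]
    have rhs : f x * w ^ (m + 1) * (f y * w ^ n)
        = f x * w ^ m * (f y * w ^ (n + 1)) + f x * w ^ m * (f (d e τ y) * w ^ n) := by
      rw [pow_succ, show f x * (w ^ m * w) * (f y * w ^ n)
          = f x * w ^ m * (w * (f y * w ^ n)) from by noncomm_ring, step e τ f w hw, mul_add]
    rw [lhs, map_add, ih, ih, rhs]

noncomputable def U (hb : ∀ g n, b (g, n) = ι (of k G g) * z ^ n)
    (hz : ∀ x, z * ι x = ι x * z + ι (d e τ x))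
    (f : MonoidAlgebra k G →ₐ[k] A) (w : A)
    (hw : ∀ x, w * f x = f x * w + f (d e τ x)) : H →ₐ[k] A :=
  AlgHom.ofLinearMap (UL b f w)
    (by
      have h1 : (1 : H) = ι 1 * z ^ 0 := by simp
      rw [h1, UL_apply ι z b hb, map_one, pow_zero, mul_one])
    (by
      intro a c
      have key : (LinearMap.mul k H).compr₂ (UL b f w)
          = (LinearMap.mul k A).compl₁₂ (UL (A := A) b f w) (UL b f w) := by
        refine b.ext fun p => b.ext fun q => ?_
        obtain ⟨g, m⟩ := p; obtain ⟨h', n⟩ := q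
        simp only [LinearMap.compr₂_apply, LinearMap.compl₁₂_apply, LinearMap.mul_apply']
        rw [hb g m, hb h' n, UL_mul_aux e τ ι z b hb hz f w hw,
          UL_apply ι z b hb, UL_apply ι z b hb]
      have := LinearMap.congr_fun (LinearMap.congr_fun key a) c
      simpa using this)

lemma U_apply (hb : ∀ g n, b (g, n) = ι (of k G g) * z ^ n)
    (hz : ∀ x, z * ι x = ι x * z + ι (d e τ x))
    (f : MonoidAlgebra k G →ₐ[k] A) (w : A)
    (hw : ∀ x, w * f x = f x * w + f (d e τ x)) (x : MonoidAlgebra k G) (n : ℕ) :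
    U e τ ι z b hb hz f w hw (ι x * z ^ n) = f x * w ^ n :=
  UL_apply ι z b hb f w x n

lemma U_ι (hb : ∀ g n, b (g, n) = ι (of k G g) * z ^ n)
    (hz : ∀ x, z * ι x = ι x * z + ι (d e τ x))
    (f : MonoidAlgebra k G →ₐ[k] A) (w : A)
    (hw : ∀ x, w * f x = f x * w + f (d e τ x)) (x : MonoidAlgebra k G) :
    U e τ ι z b hb hz f w hw (ι x) = f x := by
  have := U_apply e τ ι z b hb hz f w hw x 0
  simpa using this

lemma U_z (hb : ∀ g n, b (g, n) = ι (of k G g) * z ^ n)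
    (hz : ∀ x, z * ι x = ι x * z + ι (d e τ x))
    (f : MonoidAlgebra k G →ₐ[k] A) (w : A)
    (hw : ∀ x, w * f x = f x * w + f (d e τ x)) :
    U e τ ι z b hb hz f w hw z = w := by
  have := U_apply e τ ι z b hb hz f w hw 1 1
  simpa using this

lemma hom_ext (hb : ∀ g n, b (g, n) = ι (of k G g) * z ^ n)
    (ψ₁ ψ₂ : H →ₐ[k] A) (hg : ∀ g : G, ψ₁ (ι (of k G g)) = ψ₂ (ι (of k G g)))
    (hzz : ψ₁ z = ψ₂ z) : ψ₁ = ψ₂ := by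
  apply AlgHom.toLinearMap_injective
  refine b.ext fun p => ?_
  obtain ⟨g, n⟩ := p
  simp only [AlgHom.toLinearMap_apply, hb, map_mul, map_pow, hg, hzz]

end UP

section Anti
variable {k : Type u} [Field k] {H : Type u} [Ring H] [Algebra k H]
variable (S' : H →ₗ[k] H)

noncomputable def Lam : H ⊗[k] H →ₗ[k] H :=
  (LinearMap.mul' k H) ∘ₗ TensorProduct.map S' LinearMap.id

noncomputable def Lam' : H ⊗[k] H →ₗ[k] H :=
  (LinearMap.mul' k H) ∘ₗ TensorProduct.map LinearMap.id S'

lemma Lam_tmul (x y : H) : Lam S' (x ⊗ₜ[k] y) = S' x * y := by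
  simp [Lam, LinearMap.mul'_apply]

lemma Lam'_tmul (x y : H) : Lam' S' (x ⊗ₜ[k] y) = x * S' y := by
  simp [Lam', LinearMap.mul'_apply]

lemma Lam_mul_tmul (hS' : ∀ x y : H, S' (x * y) = S' y * S' x)
    (u : H ⊗[k] H) (x y : H) :
    Lam S' (u * (x ⊗ₜ[k] y)) = S' x * Lam S' u * y := by
  induction u using TensorProduct.induction_on with
  | zero => simp
  | tmul p q =>
    rw [Algebra.TensorProduct.tmul_mul_tmul, Lam_tmul, Lam_tmul, hS']
    noncomm_ring
  | add u v hu hv =>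
    rw [add_mul, map_add, hu, hv, map_add, mul_add, add_mul]

lemma Lam'_tmul_mul (hS' : ∀ x y : H, S' (x * y) = S' y * S' x)
    (v : H ⊗[k] H) (x y : H) :
    Lam' S' ((x ⊗ₜ[k] y) * v) = x * Lam' S' v * S' y := by
  induction v using TensorProduct.induction_on with
  | zero => simp
  | tmul p q =>
    rw [Algebra.TensorProduct.tmul_mul_tmul, Lam'_tmul, Lam'_tmul, hS']
    noncomm_ring
  | add u v hu hv =>
    rw [mul_add, map_add, hu, hv, map_add, mul_add, add_mul]

lemma Lam_conv (hS' : ∀ x y : H, S' (x * y) = S' y * S' x)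
    (u : H ⊗[k] H) (c : k) (hu : Lam S' u = c • 1) (v : H ⊗[k] H) :
    Lam S' (u * v) = c • Lam S' v := by
  induction v using TensorProduct.induction_on with
  | zero => simp
  | tmul x y =>
    rw [Lam_mul_tmul S' hS', hu, Lam_tmul]
    simp [mul_smul_comm, smul_mul_assoc]
  | add u' v' h1 h2 => rw [mul_add, map_add, h1, h2, map_add, smul_add]

lemma Lam'_conv (hS' : ∀ x y : H, S' (x * y) = S' y * S' x)
    (v : H ⊗[k] H) (c : k) (hv : Lam' S' v = c • 1) (u : H ⊗[k] H) :
    Lam' S' (u * v) = c • Lam' S' u := by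
  induction u using TensorProduct.induction_on with
  | zero => simp
  | tmul x y =>
    rw [Lam'_tmul_mul S' hS', hv, Lam'_tmul]
    simp [mul_smul_comm, smul_mul_assoc]
  | add u' v' h1 h2 => rw [add_mul, map_add, h1, h2, map_add, smul_add]

end Anti

section Rel
variable {k : Type u} [Field k] {G : Type u} [Group G]
variable {H : Type u} [Ring H] [Algebra k H]
variable (e : G) (τ : G → k) (ι : MonoidAlgebra k G →ₐ[k] H) (z : H)

lemma rel_ext
    (hrel : ∀ g : G, z * ι (of k G g) =
      ι (of k G g) * z + τ g • (ι (of k G g) * (ι (of k G e) - 1))) :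
    ∀ x, z * ι x = ι x * z + ι (d e τ x) := by
  intro x
  induction x using MonoidAlgebra.induction_linear with
  | zero => simp
  | add p q hp hq => simp only [map_add, add_mul, mul_add, hp, hq]; abel
  | single g c =>
    have hd : d e τ (of k G g) = τ g • (of k G g * (of k G e - 1)) := by
      simpa using d_single e τ g 1
    rw [single_eq]
    simp only [map_smul, hd, mul_smul_comm, smul_mul_assoc, hrel g, smul_add,
      map_mul, map_sub, map_one]

end Rel

section Bridge
variable {k : Type u} [Field k] {H : Type u} [Ring H] [Algebra k H]
variable {A B : Type u} [Ring A] [Algebra k A] [Ring B] [Algebra k B]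

lemma bridge_mapl (f : A →ₐ[k] B) (t : A ⊗[k] H) :
    TensorProduct.map f.toLinearMap LinearMap.id t
      = Algebra.TensorProduct.map f (AlgHom.id k H) t := by
  induction t using TensorProduct.induction_on with
  | zero => simp
  | tmul x y => rfl
  | add u v hu hv => rw [map_add, map_add, hu, hv]

lemma bridge_mapr (f : A →ₐ[k] B) (t : H ⊗[k] A) :
    TensorProduct.map LinearMap.id f.toLinearMap t
      = Algebra.TensorProduct.map (AlgHom.id k H) f t := by
  induction t using TensorProduct.induction_on with
  | zero => simp
  | tmul x y => rfl
  | add u v hu hv => rw [map_add, map_add, hu, hv]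

lemma bridge_assoc (t : (H ⊗[k] H) ⊗[k] H) :
    TensorProduct.assoc k H H H t = Algebra.TensorProduct.assoc k k k H H H t := rfl

lemma bridge_lid (t : k ⊗[k] H) :
    TensorProduct.lid k H t = Algebra.TensorProduct.lid k H t := rfl

lemma bridge_rid (t : H ⊗[k] k) :
    TensorProduct.rid k H t = Algebra.TensorProduct.rid k k H t := by
  induction t using TensorProduct.induction_on with
  | zero => simp
  | tmul x y => simp
  | add u v hu hv => rw [map_add, map_add, hu, hv]

end Bridge
end Stmt15Aux

open Stmt15Aux

/-- Let `e` be central in a group `G` and `τ : G → (k, +)` an additive character.  Then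
`δ(g) := τ(g)·g·(e - 1)` defines a `k`-linear derivation of the group algebra `kG`, and
the Ore extension `H = kG[z; δ]` (i.e. `H` contains `kG`, has the commutation rule
`z·g = g·z + δ(g)`, and is free over `kG` with basis the powers of `z`) is a Hopf
algebra extending the Hopf structure of `kG`, with `Δ(z) = z ⊗ 1 + e ⊗ z`. -/
theorem stmt15 {k : Type u} [Field k] [CharZero k] {G : Type u} [Group G]
    (e : G) (he : ∀ g : G, e * g = g * e)
    (τ : G → k) (hτ : ∀ g h : G, τ (g * h) = τ g + τ h)
    (H : Type u) [Ring H] [Algebra k H]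
    (ι : MonoidAlgebra k G →ₐ[k] H) (z : H)
    (hrel : ∀ g : G, z * ι (of k G g) =
      ι (of k G g) * z + τ g • (ι (of k G g) * (ι (of k G e) - 1)))
    (hbasis : ∃ b : Module.Basis (G × ℕ) k H, ∀ g n, b (g, n) = ι (of k G g) * z ^ n) :
    -- `δ` is a `k`-linear derivation of `kG`
    (∃ δ : MonoidAlgebra k G →ₗ[k] MonoidAlgebra k G,
      (∀ a b : MonoidAlgebra k G, δ (a * b) = δ a * b + a * δ b) ∧
      (∀ g : G, δ (of k G g) = τ g • (of k G g * (of k G e - 1)))) ∧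
    -- and `H` is a Hopf algebra with `z` `(1, e)`-skew primitive
    ∃ (Δ : H →ₐ[k] H ⊗[k] H) (ε : H →ₐ[k] k) (S : H →ₐ[k] Hᵐᵒᵖ),
      (∀ g : G, Δ (ι (of k G g)) = ι (of k G g) ⊗ₜ[k] ι (of k G g)) ∧
      Δ z = z ⊗ₜ[k] (1 : H) + ι (of k G e) ⊗ₜ[k] z ∧
      (∀ g : G, ε (ι (of k G g)) = 1) ∧
      ε z = 0 ∧
      (∀ g : G, S (ι (of k G g)) = op (ι (of k G g⁻¹))) ∧
      (∀ h : H, (TensorProduct.assoc k H H H)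
          ((TensorProduct.map Δ.toLinearMap LinearMap.id) (Δ h))
        = (TensorProduct.map LinearMap.id Δ.toLinearMap) (Δ h)) ∧
      (∀ h : H, (TensorProduct.lid k H) ((TensorProduct.map ε.toLinearMap LinearMap.id) (Δ h)) = h) ∧
      (∀ h : H, (TensorProduct.rid k H) ((TensorProduct.map LinearMap.id ε.toLinearMap) (Δ h)) = h) ∧
      (∀ h : H, (LinearMap.mul' k H)
          ((TensorProduct.map ((opLinearEquiv k).symm.toLinearMap ∘ₗ S.toLinearMap)
            LinearMap.id) (Δ h)) = algebraMap k H (ε h)) ∧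
      (∀ h : H, (LinearMap.mul' k H)
          ((TensorProduct.map LinearMap.id ((opLinearEquiv k).symm.toLinearMap ∘ₗ S.toLinearMap))
            (Δ h)) = algebraMap k H (ε h)) := by
  obtain ⟨b, hb⟩ := hbasis
  have hτ1 : τ 1 = 0 := by
    have h := hτ 1 1; rw [mul_one] at h; exact (left_eq_add.mp h)
  have hτinv : ∀ g : G, τ g⁻¹ = -τ g := by
    intro g; have h := hτ g g⁻¹; rw [mul_inv_cancel, hτ1] at h
    exact eq_neg_of_add_eq_zero_right h.symm
  have hz' : ∀ x, z * ι x = ι x * z + ι (d e τ x) := rel_ext e τ ι z hrel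
  have hd : ∀ g : G, d e τ (of k G g) = τ g • (of k G g * (of k G e - 1)) := by
    intro g; simpa using d_single e τ g 1
  have he' : ∀ x : G, e⁻¹ * x = x * e⁻¹ := by
    intro x
    calc e⁻¹ * x = e⁻¹ * (x * e) * e⁻¹ := by group
    _ = e⁻¹ * (e * x) * e⁻¹ := by rw [← he]
    _ = x * e⁻¹ := by group
  -- comultiplication data
  have FΔmul : ∀ a c : G,
      ι (of k G (a * c)) ⊗ₜ[k] ι (of k G (a * c))
        = (ι (of k G a) ⊗ₜ[k] ι (of k G a)) * (ι (of k G c) ⊗ₜ[k] ι (of k G c)) := by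
    intro a c
    rw [Algebra.TensorProduct.tmul_mul_tmul, map_mul (of k G), map_mul ι]
  set FΔ : G →* H ⊗[k] H :=
    { toFun := fun g => ι (of k G g) ⊗ₜ[k] ι (of k G g)
      map_one' := by
        show ι (of k G 1) ⊗ₜ[k] ι (of k G 1) = 1
        rw [map_one, map_one, Algebra.TensorProduct.one_def]
      map_mul' := fun a c => FΔmul a c } with hFΔ
  set fΔ : MonoidAlgebra k G →ₐ[k] H ⊗[k] H := (MonoidAlgebra.lift k (H ⊗[k] H) G) FΔ
    with hfΔdef
  have hfΔ : ∀ g : G, fΔ (of k G g) = ι (of k G g) ⊗ₜ[k] ι (of k G g) := by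
    intro g
    rw [hfΔdef, MonoidAlgebra.of_apply, MonoidAlgebra.lift_single, one_smul]
    rfl
  set wΔ : H ⊗[k] H := z ⊗ₜ[k] (1 : H) + ι (of k G e) ⊗ₜ[k] z with hwΔdef
  have hcommE : ∀ g : G, ι (of k G e) * ι (of k G g) = ι (of k G g) * ι (of k G e) := by
    intro g; rw [← map_mul ι, ← map_mul ι, ← map_mul (of k G), ← map_mul (of k G), he]
  have hwΔof : ∀ g : G, wΔ * fΔ (of k G g) = fΔ (of k G g) * wΔ + fΔ (d e τ (of k G g)) := by
    intro g
    have hfd : fΔ (d e τ (of k G g))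
        = τ g • ((ι (of k G g) * ι (of k G e)) ⊗ₜ[k] (ι (of k G g) * ι (of k G e))
            - ι (of k G g) ⊗ₜ[k] ι (of k G g)) := by
      rw [hd, map_smul, mul_sub, mul_one, map_sub, ← map_mul (of k G), hfΔ, hfΔ,
        map_mul (of k G), map_mul ι]
    rw [hfd, hfΔ, hwΔdef, add_mul, mul_add, Algebra.TensorProduct.tmul_mul_tmul,
      Algebra.TensorProduct.tmul_mul_tmul, Algebra.TensorProduct.tmul_mul_tmul,
      Algebra.TensorProduct.tmul_mul_tmul, one_mul, mul_one, hrel g, hcommE g]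
    simp only [mul_sub, mul_one, TensorProduct.add_tmul, TensorProduct.tmul_add,
      TensorProduct.smul_tmul', TensorProduct.tmul_smul, TensorProduct.sub_tmul,
      TensorProduct.tmul_sub, smul_sub]
    module
  have hwΔ : ∀ x, wΔ * fΔ x = fΔ x * wΔ + fΔ (d e τ x) := by
    intro x
    induction x using MonoidAlgebra.induction_linear with
    | zero => simp
    | add p q hp hq => simp only [map_add, mul_add, add_mul, hp, hq]; abel
    | single g c =>
      rw [single_eq]
      simp only [map_smul, mul_smul_comm, smul_mul_assoc, smul_add]
      rw [hwΔof g, smul_add]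
  -- counit data
  set fε : MonoidAlgebra k G →ₐ[k] k := (MonoidAlgebra.lift k k G) 1 with hfεdef
  have hfε : ∀ g : G, fε (of k G g) = 1 := by
    intro g
    rw [hfεdef, MonoidAlgebra.of_apply, MonoidAlgebra.lift_single, one_smul]
    rfl
  have hfεd : ∀ x, fε (d e τ x) = 0 := by
    intro x
    induction x using MonoidAlgebra.induction_linear with
    | zero => simp
    | add p q hp hq => rw [map_add, map_add, hp, hq, add_zero]
    | single g c =>
      rw [d_single, map_smul, map_smul, mul_sub, mul_one, map_sub,
        ← map_mul (of k G), hfε, hfε, sub_self, smul_zero, smul_zero]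
  have hwε : ∀ x, (0 : k) * fε x = fε x * 0 + fε (d e τ x) := by
    intro x; rw [zero_mul, mul_zero, zero_add, hfεd]
  -- antipode data
  have FSmul : ∀ a c : G,
      op (ι (of k G (a * c)⁻¹)) = op (ι (of k G a⁻¹)) * op (ι (of k G c⁻¹)) := by
    intro a c
    rw [mul_inv_rev, map_mul (of k G), map_mul ι, op_mul]
  set FS : G →* Hᵐᵒᵖ :=
    { toFun := fun g => op (ι (of k G g⁻¹))
      map_one' := by
        show op (ι (of k G 1⁻¹)) = 1
        rw [inv_one, map_one, map_one, op_one]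
      map_mul' := fun a c => FSmul a c } with hFS
  set fS : MonoidAlgebra k G →ₐ[k] Hᵐᵒᵖ := (MonoidAlgebra.lift k Hᵐᵒᵖ G) FS with hfSdef
  have hfS : ∀ g : G, fS (of k G g) = op (ι (of k G g⁻¹)) := by
    intro g
    rw [hfSdef, MonoidAlgebra.of_apply, MonoidAlgebra.lift_single, one_smul]
    rfl
  set wS : Hᵐᵒᵖ := op (-(ι (of k G e⁻¹) * z)) with hwSdef
  have hcommE' : ∀ g : G, ι (of k G e⁻¹) * ι (of k G g) = ι (of k G g) * ι (of k G e⁻¹) := by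
    intro g; rw [← map_mul ι, ← map_mul ι, ← map_mul (of k G), ← map_mul (of k G), he']
  have hEE' : ι (of k G e⁻¹) * ι (of k G e) = 1 := by
    rw [← map_mul ι, ← map_mul (of k G), inv_mul_cancel, map_one, map_one]
  have hwSof : ∀ g : G, wS * fS (of k G g) = fS (of k G g) * wS + fS (d e τ (of k G g)) := by
    intro g
    have hfd : fS (d e τ (of k G g))
        = τ g • (op (ι (of k G e⁻¹) * ι (of k G g⁻¹)) - op (ι (of k G g⁻¹))) := by
      rw [hd, map_smul, mul_sub, mul_one, map_sub, ← map_mul (of k G), hfS, hfS,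
        mul_inv_rev, map_mul (of k G), map_mul ι]
    have h1 : z * ι (of k G g⁻¹) = ι (of k G g⁻¹) * z
        - τ g • (ι (of k G g⁻¹) * ι (of k G e) - ι (of k G g⁻¹)) := by
      rw [hrel g⁻¹, hτinv g, mul_sub, mul_one, neg_smul, ← sub_eq_add_neg]
    rw [hfd, hfS, hwSdef, ← op_sub, ← op_smul, ← op_mul, ← op_mul, ← op_add]
    refine congrArg op ?_
    -- now a computation in H
    rw [mul_neg, ← mul_assoc, neg_mul, mul_assoc (ι (of k G e⁻¹)) z (ι (of k G g⁻¹)), h1, mul_sub, mul_smul_comm, mul_sub,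
      ← hcommE g⁻¹, ← mul_assoc (ι (of k G e⁻¹)) (ι (of k G e)), hEE', one_mul]
    simp only [← mul_assoc, hcommE' g⁻¹]
    module
  have hwS : ∀ x, wS * fS x = fS x * wS + fS (d e τ x) := by
    intro x
    induction x using MonoidAlgebra.induction_linear with
    | zero => simp
    | add p q hp hq => simp only [map_add, mul_add, add_mul, hp, hq]; abel
    | single g c =>
      rw [single_eq]
      simp only [map_smul, mul_smul_comm, smul_mul_assoc, smul_add]
      rw [hwSof g, smul_add]
  -- the three algebra maps
  set Δ : H →ₐ[k] H ⊗[k] H := U e τ ι z b hb hz' fΔ wΔ hwΔ with hΔdef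
  set ε : H →ₐ[k] k := U e τ ι z b hb hz' fε 0 hwε with hεdef
  set S : H →ₐ[k] Hᵐᵒᵖ := U e τ ι z b hb hz' fS wS hwS with hSdef
  have hΔg : ∀ g : G, Δ (ι (of k G g)) = ι (of k G g) ⊗ₜ[k] ι (of k G g) := by
    intro g; rw [hΔdef, U_ι, hfΔ]
  have hΔz : Δ z = wΔ := by rw [hΔdef]; exact U_z e τ ι z b hb hz' fΔ wΔ hwΔ
  have hεg : ∀ g : G, ε (ι (of k G g)) = 1 := by
    intro g; rw [hεdef, U_ι, hfε]
  have hεz : ε z = 0 := by rw [hεdef]; exact U_z e τ ι z b hb hz' fε 0 hwε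
  have hSg : ∀ g : G, S (ι (of k G g)) = op (ι (of k G g⁻¹)) := by
    intro g; rw [hSdef, U_ι, hfS]
  have hSz : S z = wS := by rw [hSdef]; exact U_z e τ ι z b hb hz' fS wS hwS
  refine ⟨⟨d e τ, d_mul e he τ hτ, hd⟩, Δ, ε, S, hΔg, hΔz, hεg, hεz, hSg, ?_, ?_, ?_, ?_, ?_⟩
  · -- coassociativity
    have hL : (Algebra.TensorProduct.assoc k k k H H H).toAlgHom.comp
        ((Algebra.TensorProduct.map Δ (AlgHom.id k H)).comp Δ)
        = (Algebra.TensorProduct.map (AlgHom.id k H) Δ).comp Δ := by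
      refine hom_ext ι z b hb _ _ (fun g => ?_) ?_
      · simp [hΔg, Algebra.TensorProduct.map_tmul, Algebra.TensorProduct.assoc_tmul,
          -MonoidAlgebra.of_apply]
      · simp only [AlgHom.coe_comp, AlgEquiv.toAlgHom_eq_coe, AlgHom.coe_coe,
          Function.comp_apply, hΔz, hwΔdef, map_add, Algebra.TensorProduct.map_tmul,
          Algebra.TensorProduct.assoc_tmul, AlgHom.id_apply, hΔg, map_one,
          Algebra.TensorProduct.one_def, TensorProduct.add_tmul, TensorProduct.tmul_add]
        abel
    intro h
    rw [bridge_mapl Δ (Δ h), bridge_assoc, bridge_mapr Δ (Δ h)]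
    have := DFunLike.congr_fun hL h
    simpa using this
  · -- left counit
    have hC : (Algebra.TensorProduct.lid k H).toAlgHom.comp
        ((Algebra.TensorProduct.map ε (AlgHom.id k H)).comp Δ) = AlgHom.id k H := by
      refine hom_ext ι z b hb _ _ (fun g => ?_) ?_
      · simp [hΔg, hεg, -MonoidAlgebra.of_apply]
      · simp [hΔz, hwΔdef, hεz, hεg, -MonoidAlgebra.of_apply]
    intro h
    rw [bridge_mapl ε (Δ h), bridge_lid]
    have := DFunLike.congr_fun hC h
    simpa using this
  · -- right counit
    have hC : (Algebra.TensorProduct.rid k k H).toAlgHom.comp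
        ((Algebra.TensorProduct.map (AlgHom.id k H) ε).comp Δ) = AlgHom.id k H := by
      refine hom_ext ι z b hb _ _ (fun g => ?_) ?_
      · simp [hΔg, hεg, -MonoidAlgebra.of_apply]
      · simp [hΔz, hwΔdef, hεz, hεg, -MonoidAlgebra.of_apply]
    intro h
    rw [bridge_mapr ε (Δ h), bridge_rid]
    have := DFunLike.congr_fun hC h
    simpa using this
  · -- left antipode law
    set S' : H →ₗ[k] H := (opLinearEquiv k).symm.toLinearMap ∘ₗ S.toLinearMap with hS'def
    have hS'v : ∀ x : H, S' x = unop (S x) := fun x => rfl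
    have hS'mul : ∀ x y : H, S' (x * y) = S' y * S' x := by
      intro x y; simp [hS'v, map_mul]
    have hPg : ∀ g : G, Lam S' (Δ (ι (of k G g))) = ε (ι (of k G g)) • (1 : H) := by
      intro g
      rw [hΔg, Lam_tmul, hS'v, hSg, unop_op, ← map_mul ι, ← map_mul (of k G),
        inv_mul_cancel, map_one, map_one, hεg, one_smul]
    have hPz : Lam S' (Δ z) = ε z • (1 : H) := by
      rw [hΔz, hwΔdef, map_add, Lam_tmul, Lam_tmul, hS'v, hS'v, hSz, hwSdef, unop_op,
        hSg e, unop_op, hεz]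
      simp
    have hPmul : ∀ a c : H, Lam S' (Δ a) = ε a • (1 : H) → Lam S' (Δ c) = ε c • (1 : H) →
        Lam S' (Δ (a * c)) = ε (a * c) • (1 : H) := by
      intro a c ha hc
      rw [map_mul, Lam_conv S' hS'mul _ _ ha, hc, map_mul, smul_smul]
    have key : ∀ h : H, Lam S' (Δ h) = ε h • (1 : H) := by
      have hgen : ∀ p : G × ℕ, Lam S' (Δ (b p)) = ε (b p) • (1 : H) := by
        rintro ⟨g, n⟩
        rw [hb]
        induction n with
        | zero => rw [pow_zero, mul_one]; exact hPg g
        | succ n ih => rw [pow_succ, ← mul_assoc]; exact hPmul _ z ih hPz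
      intro h
      have hmaps : (Lam S' ∘ₗ Δ.toLinearMap)
          = (LinearMap.toSpanSingleton k H 1) ∘ₗ ε.toLinearMap := by
        refine b.ext fun p => ?_
        simp only [LinearMap.coe_comp, Function.comp_apply, AlgHom.toLinearMap_apply,
          LinearMap.toSpanSingleton_apply]
        exact hgen p
      have := DFunLike.congr_fun hmaps h
      simpa using this
    intro h
    rw [Algebra.algebraMap_eq_smul_one]
    exact key h
  · -- right antipode law
    set S' : H →ₗ[k] H := (opLinearEquiv k).symm.toLinearMap ∘ₗ S.toLinearMap with hS'def
    have hS'v : ∀ x : H, S' x = unop (S x) := fun x => rfl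
    have hS'mul : ∀ x y : H, S' (x * y) = S' y * S' x := by
      intro x y; simp [hS'v, map_mul]
    have hPg : ∀ g : G, Lam' S' (Δ (ι (of k G g))) = ε (ι (of k G g)) • (1 : H) := by
      intro g
      rw [hΔg, Lam'_tmul, hS'v, hSg, unop_op, ← map_mul ι, ← map_mul (of k G),
        mul_inv_cancel, map_one, map_one, hεg, one_smul]
    have hPz : Lam' S' (Δ z) = ε z • (1 : H) := by
      rw [hΔz, hwΔdef, map_add, Lam'_tmul, Lam'_tmul, hS'v, hS'v, hSz, hwSdef, unop_op,
        map_one S, unop_one, hεz, mul_one, mul_neg, ← mul_assoc, ← map_mul ι,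
        ← map_mul (of k G), mul_inv_cancel, map_one, map_one, one_mul]
      simp
    have hPmul : ∀ a c : H, Lam' S' (Δ a) = ε a • (1 : H) → Lam' S' (Δ c) = ε c • (1 : H) →
        Lam' S' (Δ (a * c)) = ε (a * c) • (1 : H) := by
      intro a c ha hc
      rw [map_mul, Lam'_conv S' hS'mul _ _ hc, ha, map_mul, smul_smul, mul_comm (ε c) (ε a)]
    have key : ∀ h : H, Lam' S' (Δ h) = ε h • (1 : H) := by
      have hgen : ∀ p : G × ℕ, Lam' S' (Δ (b p)) = ε (b p) • (1 : H) := by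
        rintro ⟨g, n⟩
        rw [hb]
        induction n with
        | zero => rw [pow_zero, mul_one]; exact hPg g
        | succ n ih => rw [pow_succ, ← mul_assoc]; exact hPmul _ z ih hPz
      intro h
      have hmaps : (Lam' S' ∘ₗ Δ.toLinearMap)
          = (LinearMap.toSpanSingleton k H 1) ∘ₗ ε.toLinearMap := by
        refine b.ext fun p => ?_
        simp only [LinearMap.coe_comp, Function.comp_apply, AlgHom.toLinearMap_apply,
          LinearMap.toSpanSingleton_apply]
        exact hgen p
      have := DFunLike.congr_fun hmaps h
      simpa using this
    intro h
    rw [Algebra.algebraMap_eq_smul_one]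
    exact key h
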